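/- There exists a universal constant C > 0 such that for every n ≥ 2 the lazy random walk on the hypercube {0,1}^n — which at each step holds with probability 1/2 and otherwise flips a uniformly random coordinate, so P(x,x) = 1/2 and P(x,y) = 1/(2n) when x and y differ in exactly one coordinate — has total variation mixing time τ(1/4) ≤ C·n·(log n)². -/

import Mathlib

open Finset

noncomputable section

attribute [local instance] Classical.propDecidable

variable {K : Type*} [Fintype K]

/-- `matPow P t u v` is the `t`-step transition probability from `u` to `v`. -/
def matPow (P : K → K → ℝ) : ℕ → K → K → ℝ
  | 0 => fun u v => if u = v then 1 else 0
  | (t + 1) => fun u v => ∑ w, matPow P t u w * P w v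

/-- `p` is a probability distribution. -/
def IsDist (p : K → ℝ) : Prop := (∀ v, 0 ≤ p v) ∧ ∑ v, p v = 1

/-- the distribution after `t` steps starting from `p`. -/
def stepDist (P : K → K → ℝ) (p : K → ℝ) (t : ℕ) (v : K) : ℝ :=
  ∑ u, p u * matPow P t u v

/-- total variation distance. -/
def tvDist (μ π : K → ℝ) : ℝ := (1 / 2) * ∑ v, |μ v - π v|

/-- total variation mixing time `τ(ε)`: the max over initial distributions of the
least time at which total variation distance drops to `ε`. -/
def mixTV (P : K → K → ℝ) (π : K → ℝ) (ε : ℝ) : ℕ :=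
  sSup {n : ℕ | ∃ p : K → ℝ, IsDist p ∧
    n = sInf {t : ℕ | tvDist (stepDist P p t) π ≤ ε}}

/-- the lazy random walk on the hypercube `{0,1}^n`. -/
def cubeP (n : ℕ) (x y : Fin n → Bool) : ℝ :=
  if x = y then 1 / 2
  else if (Finset.univ.filter (fun i => x i ≠ y i)).card = 1 then 1 / (2 * n)
  else 0

namespace CubeMix

variable {n : ℕ}

/-- Character of the hypercube indexed by a subset `S`. -/
def chi (S : Finset (Fin n)) (x : Fin n → Bool) : ℝ :=
  ∏ i ∈ S, (if x i then (-1:ℝ) else 1)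

lemma abs_chi (S : Finset (Fin n)) (x : Fin n → Bool) : |chi S x| = 1 := by
  rw [chi, Finset.abs_prod]
  refine Finset.prod_eq_one fun i _ => ?_
  by_cases h : x i <;> simp [h]

lemma orth (x y : Fin n → Bool) :
    ∑ S : Finset (Fin n), chi S x * chi S y = if x = y then (2:ℝ)^n else 0 := by
  classical
  have key : ∀ S : Finset (Fin n), chi S x * chi S y
      = (∏ i ∈ S, ((if x i then (-1:ℝ) else 1) * (if y i then (-1:ℝ) else 1)))
          * ∏ i ∈ Finset.univ \ S, (1:ℝ) := by
    intro S; rw [chi, chi, Finset.prod_mul_distrib, Finset.prod_const_one, mul_one]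
  rw [Finset.sum_congr rfl fun S _ => key S]
  rw [← Finset.powerset_univ, ← Finset.prod_add]
  by_cases h : x = y
  · subst h
    rw [if_pos rfl]
    have : ∀ i : Fin n, ((if x i then (-1:ℝ) else 1) * (if x i then (-1:ℝ) else 1)) + 1 = 2 := by
      intro i; by_cases hi : x i <;> simp [hi] <;> norm_num
    rw [Finset.prod_congr rfl fun i _ => this i, Finset.prod_const, Finset.card_univ,
      Fintype.card_fin]
  · rw [if_neg h]
    obtain ⟨i, hi⟩ : ∃ i, x i ≠ y i := by
      by_contra hc; push_neg at hc; exact h (funext hc)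
    refine Finset.prod_eq_zero (Finset.mem_univ i) ?_
    cases hx : x i <;> cases hy : y i <;> simp [hx, hy] at hi ⊢

lemma filter_flip (x : Fin n → Bool) (i : Fin n) :
    (Finset.univ.filter (fun j => x j ≠ (Function.update x i (!x i)) j)) = {i} := by
  ext j
  simp only [Finset.mem_filter, Finset.mem_univ, true_and, Finset.mem_singleton]
  by_cases h : j = i
  · subst h; simp [Function.update_self]
  · simp [Function.update_of_ne h, h]

lemma eq_flip_iff (x y : Fin n → Bool) (i : Fin n) :
    y = Function.update x i (!x i) ↔
      (Finset.univ.filter (fun j => x j ≠ y j)) = {i} := by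
  constructor
  · rintro rfl; exact filter_flip x i
  · intro h
    funext j
    by_cases hj : j = i
    · subst hj
      have : j ∈ Finset.univ.filter (fun k => x k ≠ y k) := by rw [h]; simp
      simp only [Finset.mem_filter, Finset.mem_univ, true_and] at this
      rw [Function.update_self]
      cases hx : x j <;> cases hy : y j <;> simp_all
    · have : j ∉ Finset.univ.filter (fun k => x k ≠ y k) := by rw [h]; simp [hj]
      simp only [Finset.mem_filter, Finset.mem_univ, true_and, not_not] at this
      rw [Function.update_of_ne hj, this]

lemma cube_decomp (hn : 0 < n) (x y : Fin n → Bool) :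
    cubeP n x y = (if x = y then 1/2 else 0)
      + ∑ i : Fin n, (if y = Function.update x i (!x i) then 1/(2*(n:ℝ)) else 0) := by
  by_cases h : x = y
  · subst h
    rw [cubeP, if_pos rfl, if_pos rfl]
    have : ∀ i : Fin n, x ≠ Function.update x i (!x i) := by
      intro i hc
      have := congrFun hc i
      rw [Function.update_self] at this
      cases hx : x i <;> simp [hx] at this
    simp [this]
  · rw [cubeP, if_neg h, if_neg h, zero_add]
    by_cases hc : (Finset.univ.filter (fun i => x i ≠ y i)).card = 1
    · rw [if_pos hc]
      obtain ⟨i0, hi0⟩ := Finset.card_eq_one.mp hc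
      have : ∀ i : Fin n, (y = Function.update x i (!x i)) ↔ i = i0 := by
        intro i
        rw [eq_flip_iff, hi0]
        constructor
        · intro hs; exact (Finset.singleton_inj.mp hs.symm)
        · rintro rfl; rfl
      rw [Finset.sum_congr rfl fun i _ => by rw [if_congr (this i) rfl rfl]]
      simp
    · rw [if_neg hc]
      symm
      refine Finset.sum_eq_zero fun i _ => ?_
      rw [if_neg]
      intro hy
      apply hc
      rw [(eq_flip_iff x y i).mp hy, Finset.card_singleton]

lemma sum_P_mul (x : Fin n → Bool) (hn : 0 < n) (f : (Fin n → Bool) → ℝ) :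
    ∑ y, cubeP n x y * f y
      = (1/2) * f x + (1/(2*(n:ℝ))) * ∑ i, f (Function.update x i (!x i)) := by
  rw [Finset.sum_congr rfl fun y _ => by rw [cube_decomp hn x y, add_mul]]
  rw [Finset.sum_add_distrib]
  congr 1
  · simp [ite_mul]
  · rw [Finset.sum_congr rfl fun y _ => Finset.sum_mul ..]
    rw [Finset.sum_comm]
    rw [Finset.mul_sum]
    refine Finset.sum_congr rfl fun i _ => ?_
    simp [ite_mul]

def lam (n : ℕ) (S : Finset (Fin n)) : ℝ := 1 - (S.card : ℝ) / n

lemma lam_nonneg (hn : 0 < n) (S : Finset (Fin n)) : 0 ≤ lam n S := by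
  have h : (S.card : ℝ) ≤ n := by
    have h2 := Finset.card_le_univ S
    rw [Fintype.card_fin] at h2
    exact_mod_cast h2
  have hn' : (0:ℝ) < n := by exact_mod_cast hn
  rw [lam, sub_nonneg, div_le_one hn']
  exact h

lemma lam_le_exp (hn : 0 < n) (S : Finset (Fin n)) :
    lam n S ≤ Real.exp (-((S.card : ℝ) / n)) := by
  have h := Real.add_one_le_exp (-((S.card : ℝ) / n))
  rw [lam]
  linarith [h]

lemma chi_flip (S : Finset (Fin n)) (x : Fin n → Bool) (i : Fin n) :
    chi S (Function.update x i (!x i)) = (if i ∈ S then (-1:ℝ) else 1) * chi S x := by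
  by_cases hi : i ∈ S
  · rw [if_pos hi, chi, chi, Finset.prod_eq_mul_prod_sdiff_singleton_of_mem hi,
      Finset.prod_eq_mul_prod_sdiff_singleton_of_mem hi (fun j => (if x j then (-1:ℝ) else 1))]
    have h1 : ∀ j ∈ S \ {i}, (if (Function.update x i (!x i)) j then (-1:ℝ) else 1)
        = (if x j then (-1:ℝ) else 1) := by
      intro j hj
      rw [Finset.mem_sdiff, Finset.mem_singleton] at hj
      rw [Function.update_of_ne hj.2]
    rw [Finset.prod_congr rfl h1, Function.update_self]
    cases hx : x i <;> simp [hx] <;> ring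
  · rw [if_neg hi, one_mul, chi, chi]
    refine Finset.prod_congr rfl fun j hj => ?_
    have : j ≠ i := fun h => hi (h ▸ hj)
    rw [Function.update_of_ne this]

lemma eigen (hn : 0 < n) (S : Finset (Fin n)) (x : Fin n → Bool) :
    ∑ y, cubeP n x y * chi S y = lam n S * chi S x := by
  rw [sum_P_mul x hn (chi S)]
  rw [Finset.sum_congr rfl fun i _ => chi_flip S x i, ← Finset.sum_mul]
  have hsum : (∑ i : Fin n, if i ∈ S then (-1:ℝ) else 1) = (n:ℝ) - 2 * S.card := by
    have h0 : ∀ i : Fin n, (if i ∈ S then (-1:ℝ) else 1)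
        = 1 - 2 * (if i ∈ S then (1:ℝ) else 0) := by
      intro i; split <;> ring
    rw [Finset.sum_congr rfl fun i _ => h0 i, Finset.sum_sub_distrib, Finset.sum_const,
      ← Finset.mul_sum, Finset.sum_boole]
    simp
  rw [hsum, lam]
  have hn' : ((n:ℝ)) ≠ 0 := by exact_mod_cast hn.ne'
  field_simp
  ring

lemma cubeP_symm (x y : Fin n → Bool) : cubeP n x y = cubeP n y x := by
  have h2 : (Finset.univ.filter fun i => x i ≠ y i)
      = (Finset.univ.filter fun i => y i ≠ x i) := by
    apply Finset.filter_congr; intro i _; simp [ne_comm]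
  by_cases h : x = y
  · subst h; rfl
  · have h' : ¬ y = x := fun hyx => h hyx.symm
    rw [cubeP, cubeP, if_neg h, if_neg h', h2]

lemma spectral (hn : 0 < n) (t : ℕ) (x : Fin n → Bool) : ∀ y,
    matPow (cubeP n) t x y
      = ((2:ℝ)^n)⁻¹ * ∑ S : Finset (Fin n), lam n S ^ t * (chi S x * chi S y) := by
  induction t with
  | zero =>
    intro y
    rw [matPow]
    simp only [pow_zero, one_mul]
    rw [orth]
    by_cases h : x = y
    · rw [if_pos h, if_pos h]
      rw [inv_mul_cancel₀ (by positivity)]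
    · rw [if_neg h, if_neg h, mul_zero]
  | succ t ih =>
    intro y
    rw [matPow]
    simp only [fun w => ih w]
    have key : ∀ S : Finset (Fin n), ∑ w, chi S w * cubeP n w y = lam n S * chi S y := by
      intro S
      rw [Finset.sum_congr rfl fun w _ => by rw [cubeP_symm w y, mul_comm]]
      exact eigen hn S y
    have step : ∀ S : Finset (Fin n),
        ∑ w, ((2:ℝ)^n)⁻¹ * (lam n S ^ t * (chi S x * chi S w)) * cubeP n w y
          = ((2:ℝ)^n)⁻¹ * (lam n S ^ (t+1) * (chi S x * chi S y)) := by
      intro S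
      have h0 : ∀ w, ((2:ℝ)^n)⁻¹ * (lam n S ^ t * (chi S x * chi S w)) * cubeP n w y
          = (((2:ℝ)^n)⁻¹ * lam n S ^ t * chi S x) * (chi S w * cubeP n w y) := by
        intro w; ring
      rw [Finset.sum_congr rfl fun w _ => h0 w, ← Finset.mul_sum, key S, pow_succ]
      ring
    calc ∑ w, (((2:ℝ)^n)⁻¹ * ∑ S, lam n S ^ t * (chi S x * chi S w)) * cubeP n w y
        = ∑ w, ∑ S, ((2:ℝ)^n)⁻¹ * (lam n S ^ t * (chi S x * chi S w)) * cubeP n w y := by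
          refine Finset.sum_congr rfl fun w _ => ?_
          rw [Finset.mul_sum, Finset.sum_mul]
      _ = ∑ S, ∑ w, ((2:ℝ)^n)⁻¹ * (lam n S ^ t * (chi S x * chi S w)) * cubeP n w y :=
          Finset.sum_comm
      _ = ∑ S, ((2:ℝ)^n)⁻¹ * (lam n S ^ (t+1) * (chi S x * chi S y)) :=
          Finset.sum_congr rfl fun S _ => step S
      _ = ((2:ℝ)^n)⁻¹ * ∑ S, lam n S ^ (t+1) * (chi S x * chi S y) :=
          (Finset.mul_sum _ _ _).symm

lemma matPow_sub_bound (hn : 0 < n) (t : ℕ) (x y : Fin n → Bool) :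
    |matPow (cubeP n) t x y - 1 / 2^n|
      ≤ (1/2^n) * ∑ S ∈ (Finset.univ.erase (∅ : Finset (Fin n))), lam n S ^ t := by
  rw [spectral hn t x y]
  have hmem : (∅ : Finset (Fin n)) ∈ (Finset.univ : Finset (Finset (Fin n))) :=
    Finset.mem_univ _
  rw [← Finset.sum_erase_add _ _ hmem]
  have hempty : lam n ∅ ^ t * (chi ∅ x * chi ∅ y) = 1 := by
    simp [lam, chi]
  rw [hempty, mul_add, mul_one]
  have hc : ((2:ℝ)^n)⁻¹ = 1/2^n := by rw [one_div]
  rw [hc, add_sub_cancel_right, abs_mul, abs_of_pos (show (0:ℝ) < 1/2^n by positivity)]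
  have h2 : |∑ S ∈ Finset.univ.erase (∅:Finset (Fin n)), lam n S ^ t * (chi S x * chi S y)|
      ≤ ∑ S ∈ Finset.univ.erase (∅:Finset (Fin n)), lam n S ^ t := by
    refine (Finset.abs_sum_le_sum_abs _ _).trans (Finset.sum_le_sum fun S _ => ?_)
    rw [abs_mul, abs_mul, abs_chi, abs_chi, mul_one, mul_one,
      abs_of_nonneg (pow_nonneg (lam_nonneg hn S) t)]
  exact mul_le_mul_of_nonneg_left h2 (by positivity)

lemma tv_bound (hn : 0 < n) (p : (Fin n → Bool) → ℝ) (hp : IsDist p) (t : ℕ) :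
    tvDist (stepDist (cubeP n) p t) (fun _ : Fin n → Bool => 1 / 2^n)
      ≤ (1/2) * ∑ S ∈ Finset.univ.erase (∅ : Finset (Fin n)), lam n S ^ t := by
  set E := ∑ S ∈ Finset.univ.erase (∅:Finset (Fin n)), lam n S ^ t with hE
  have hE0 : 0 ≤ E :=
    Finset.sum_nonneg fun S _ => pow_nonneg (lam_nonneg hn S) t
  have hptw : ∀ v, |stepDist (cubeP n) p t v - 1/2^n| ≤ 1/2^n * E := by
    intro v
    rw [stepDist]
    have h1 : ∑ u, p u * matPow (cubeP n) t u v - 1/2^n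
        = ∑ u, p u * (matPow (cubeP n) t u v - 1/2^n) := by
      rw [Finset.sum_congr rfl fun u _ => mul_sub (p u) _ _, Finset.sum_sub_distrib,
        ← Finset.sum_mul, hp.2, one_mul]
    rw [h1]
    calc |∑ u, p u * (matPow (cubeP n) t u v - 1/2^n)|
        ≤ ∑ u, |p u * (matPow (cubeP n) t u v - 1/2^n)| :=
          Finset.abs_sum_le_sum_abs _ _
      _ ≤ ∑ u, p u * (1/2^n * E) := by
          refine Finset.sum_le_sum fun u _ => ?_
          rw [abs_mul, abs_of_nonneg (hp.1 u)]
          exact mul_le_mul_of_nonneg_left (matPow_sub_bound hn t u v) (hp.1 u)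
      _ = 1/2^n * E := by rw [← Finset.sum_mul, hp.2, one_mul]
  rw [tvDist]
  have hcard : (Fintype.card (Fin n → Bool) : ℝ) = 2^n := by
    simp [Fintype.card_fun]
  calc (1/2 : ℝ) * ∑ v, |stepDist (cubeP n) p t v - 1/2^n|
      ≤ (1/2) * ∑ _v : Fin n → Bool, (1/2^n * E) := by
        gcongr with v _
        exact hptw v
    _ = (1/2) * ((2:ℝ)^n * (1/2^n * E)) := by
        rw [Finset.sum_const, nsmul_eq_mul, Finset.card_univ, Fintype.card_fun,
          Fintype.card_bool, Fintype.card_fin]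
        push_cast
        ring
    _ = (1/2) * E := by
        field_simp
  
lemma sum_r_pow (r : ℝ) :
    ∑ S : Finset (Fin n), r ^ S.card = (r + 1)^n := by
  have h := Finset.prod_add (fun _ : Fin n => r) (fun _ => (1:ℝ)) Finset.univ
  rw [Finset.prod_const, Finset.card_univ, Fintype.card_fin, Finset.powerset_univ] at h
  rw [h]
  refine Finset.sum_congr rfl fun S _ => ?_
  rw [Finset.prod_const, Finset.prod_const_one, mul_one]

lemma E_le (hn : 0 < n) (t : ℕ) :
    ∑ S ∈ Finset.univ.erase (∅ : Finset (Fin n)), lam n S ^ t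
      ≤ (Real.exp (-((t:ℝ) / n)) + 1)^n - 1 := by
  set r := Real.exp (-((t:ℝ)/n)) with hr
  have hr0 : 0 ≤ r := (Real.exp_pos _).le
  have h1 : ∀ S : Finset (Fin n), lam n S ^ t ≤ r ^ S.card := by
    intro S
    calc lam n S ^ t ≤ (Real.exp (-((S.card:ℝ)/n)))^t :=
          pow_le_pow_left₀ (lam_nonneg hn S) (lam_le_exp hn S) t
      _ = Real.exp ((t:ℝ) * (-((S.card:ℝ)/n))) := (Real.exp_nat_mul _ t).symm
      _ = Real.exp ((S.card:ℝ) * (-((t:ℝ)/n))) := by congr 1; ring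
      _ = r ^ S.card := Real.exp_nat_mul _ S.card
  have h2 := Finset.sum_le_sum (fun S (_ : S ∈ Finset.univ.erase (∅:Finset (Fin n))) => h1 S)
  have h3 : ∑ S ∈ Finset.univ.erase (∅:Finset (Fin n)), r ^ S.card
        + r ^ (∅:Finset (Fin n)).card
      = ∑ S : Finset (Fin n), r ^ S.card :=
    Finset.sum_erase_add _ _ (Finset.mem_univ _)
  rw [Finset.card_empty, pow_zero] at h3
  rw [sum_r_pow r] at h3
  have h4 : ∑ S ∈ Finset.univ.erase (∅:Finset (Fin n)), r ^ S.card = (r+1)^n - 1 := by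
    linarith
  rw [h4] at h2
  exact h2

lemma tv_le_quarter (hn2 : 2 ≤ n) (p : (Fin n → Bool) → ℝ) (hp : IsDist p) :
    tvDist (stepDist (cubeP n) p (n * (2 + ⌈Real.log n⌉₊)))
      (fun _ : Fin n → Bool => 1 / 2^n) ≤ 1/4 := by
  have hn : 0 < n := lt_of_lt_of_le two_pos hn2
  have hnR : (0:ℝ) < n := by exact_mod_cast hn
  set t := n * (2 + ⌈Real.log n⌉₊) with ht
  have htn : ((t:ℝ)/n) = 2 + (⌈Real.log n⌉₊ : ℝ) := by
    rw [ht]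
    push_cast
    field_simp
  set r := Real.exp (-((t:ℝ)/n)) with hr
  have hrn : r * n ≤ 1/4 := by
    have h1 : r = Real.exp (-2) * Real.exp (-(⌈Real.log n⌉₊:ℝ)) := by
      rw [hr, ← Real.exp_add, htn]; congr 1; ring
    have h2 : Real.exp (-(⌈Real.log n⌉₊:ℝ)) ≤ Real.exp (-(Real.log n)) :=
      Real.exp_le_exp.mpr (neg_le_neg (Nat.le_ceil _))
    have h3 : Real.exp (-(Real.log n)) = (n:ℝ)⁻¹ := by
      rw [Real.exp_neg, Real.exp_log hnR]
    have h5 : (2:ℝ) ≤ Real.exp 1 := by have := Real.add_one_le_exp 1; linarith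
    have h6 : (4:ℝ) ≤ Real.exp 2 := by
      calc (4:ℝ) = 2*2 := by norm_num
        _ ≤ Real.exp 1 * Real.exp 1 := by nlinarith
        _ = Real.exp 2 := by rw [← Real.exp_add]; norm_num
    have h4 : Real.exp (-2) ≤ 1/4 := by
      rw [Real.exp_neg]
      rw [inv_le_comm₀ (Real.exp_pos 2) (by norm_num)]
      linarith
    calc r * n = Real.exp (-2) * Real.exp (-(⌈Real.log n⌉₊:ℝ)) * n := by rw [h1]
      _ ≤ (1/4) * ((n:ℝ)⁻¹) * n := by
          apply mul_le_mul_of_nonneg_right _ hnR.le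
          calc Real.exp (-2) * Real.exp (-(⌈Real.log n⌉₊:ℝ))
              ≤ (1/4) * Real.exp (-(Real.log n)) := by
                apply mul_le_mul h4 h2 (Real.exp_pos _).le (by norm_num)
            _ = (1/4) * (n:ℝ)⁻¹ := by rw [h3]
      _ = 1/4 := by field_simp
  have hr0 : 0 ≤ r := (Real.exp_pos _).le
  have hrn0 : 0 ≤ r * n := by positivity
  have hpow : (r + 1)^n ≤ Real.exp (r * n) := by
    calc (r+1)^n ≤ (Real.exp r)^n := by
          apply pow_le_pow_left₀ (by positivity)
          have := Real.add_one_le_exp r; linarith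
      _ = Real.exp ((n:ℝ) * r) := (Real.exp_nat_mul _ _).symm
      _ = Real.exp (r * n) := by rw [mul_comm]
  have hexp : Real.exp (r * n) ≤ (1 - r * n)⁻¹ := by
    have hpos : (0:ℝ) < 1 - r * n := by linarith
    have h7 : 1 - r * n ≤ Real.exp (-(r*n)) := by
      have := Real.add_one_le_exp (-(r*n)); linarith
    rw [show Real.exp (r*n) = (Real.exp (-(r*n)))⁻¹ by rw [Real.exp_neg, inv_inv]]
    exact inv_anti₀ hpos h7
  have hinv : (1 - r * n)⁻¹ ≤ 4/3 := by
    rw [inv_le_comm₀ (by linarith) (by norm_num)]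
    linarith
  have hE : ∑ S ∈ Finset.univ.erase (∅ : Finset (Fin n)), lam n S ^ t ≤ 1/2 := by
    calc ∑ S ∈ Finset.univ.erase (∅ : Finset (Fin n)), lam n S ^ t
        ≤ (r + 1)^n - 1 := E_le hn t
      _ ≤ Real.exp (r*n) - 1 := by linarith
      _ ≤ (1 - r*n)⁻¹ - 1 := by linarith
      _ ≤ 1/2 := by linarith
  calc tvDist (stepDist (cubeP n) p t) (fun _ : Fin n → Bool => 1 / 2^n)
      ≤ (1/2) * ∑ S ∈ Finset.univ.erase (∅ : Finset (Fin n)), lam n S ^ t :=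
        tv_bound hn p hp t
    _ ≤ (1/2) * (1/2) := by linarith
    _ ≤ 1/4 := by norm_num

end CubeMix


/-- the lazy random walk on the hypercube `{0,1}^n` mixes in time
`O(n (log n)²)`. -/
theorem cube_mixing_time :
    ∃ C : ℝ, 0 < C ∧ ∀ n : ℕ, 2 ≤ n →
      (mixTV (cubeP n) (fun _ : Fin n → Bool => 1 / 2 ^ n) (1 / 4) : ℝ) ≤
        C * n * Real.log n ^ 2 := by
  refine ⟨20, by norm_num, fun n hn2 => ?_⟩
  have hn : 0 < n := lt_of_lt_of_le two_pos hn2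
  have hnR : (1:ℝ) ≤ n := by exact_mod_cast hn
  set T := n * (2 + ⌈Real.log n⌉₊) with hT
  have hmix : mixTV (cubeP n) (fun _ : Fin n → Bool => 1 / 2 ^ n) (1 / 4) ≤ T := by
    apply csSup_le
    · refine ⟨sInf {t : ℕ | tvDist
          (stepDist (cubeP n) (fun v => if v = (fun _ => false) then (1:ℝ) else 0) t)
          (fun _ : Fin n → Bool => 1 / 2 ^ n) ≤ 1/4},
        (fun v => if v = (fun _ => false) then (1:ℝ) else 0), ?_, rfl⟩
      constructor
      · intro v
        simp only []
        split <;> norm_num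
      · simp
    · rintro m ⟨p, hp, rfl⟩
      exact Nat.sInf_le (CubeMix.tv_le_quarter hn2 p hp)
  have hceil : (⌈Real.log n⌉₊ : ℝ) ≤ Real.log n + 1 :=
    (Nat.ceil_lt_add_one (Real.log_nonneg hnR)).le
  have hlog : (1/2 : ℝ) ≤ Real.log n := by
    have h2 : Real.log 2 ≤ Real.log n := by
      apply Real.log_le_log (by norm_num)
      exact_mod_cast hn2
    have := Real.log_two_gt_d9
    linarith
  calc (mixTV (cubeP n) (fun _ : Fin n → Bool => 1 / 2 ^ n) (1 / 4) : ℝ)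
      ≤ (T : ℝ) := by exact_mod_cast hmix
    _ = (n:ℝ) * (2 + (⌈Real.log n⌉₊:ℝ)) := by rw [hT]; push_cast; ring
    _ ≤ (n:ℝ) * (3 + Real.log n) := by
        apply mul_le_mul_of_nonneg_left _ (by positivity)
        linarith
    _ ≤ 20 * n * Real.log n ^ 2 := by nlinarith [sq_nonneg (Real.log n - 1/2)]
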